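/- Let R ∈ End((V ⊗ W)⊗(V ⊗ W)) be defined by R((v₁ ⊗ w₁) ⊗ (v₂ ⊗ w₂)) = ε·(v₂ ⊗ w₁) ⊗ (v₁ ⊗ w₂) with ε = ±1. Then the normalized trace of R(1⊗R)···, namely Tr(R₁R₂⋯R_{n−1})/(dim V · dim W)ⁿ, equals ε^{n−1}·(dim V)^{1−n}, where R_i acts as R on the i-th and (i+1)-st tensor factors of (V ⊗ W)^{⊗n}. -/

import Mathlib

/-- The matrix of the signed `V`-flip `R`-matrix acting on legs `i, i+1` of
`E^{⊗n}`, where `E = V ⊗ W` with `dim V = p`, `dim W = q`, realized on the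
standard basis indexed by `Fin n → Fin p × Fin q`:
`R((v₁⊗w₁)⊗(v₂⊗w₂)) = ε (v₂⊗w₁)⊗(v₁⊗w₂)` (V-components at legs `i, i+1` are
swapped, all W-components and the other V-components are fixed). -/
def Rmat (p q n : ℕ) (ε : ℂ) (i : ℕ) :
    Matrix (Fin n → Fin p × Fin q) (Fin n → Fin p × Fin q) ℂ :=
  fun f g =>
    if (∀ k : Fin n, (f k).2 = (g k).2) ∧
        (∀ k : Fin n, k.val ≠ i → k.val ≠ i + 1 → (f k).1 = (g k).1) ∧
        (∀ k l : Fin n, k.val = i → l.val = i + 1 → (f k).1 = (g l).1 ∧ (f l).1 = (g k).1)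
      then ε else 0

namespace Stmt5Aux

variable {p q n : ℕ}

/-- permutation matrix -/
def Pmat (σ : Equiv.Perm (Fin n → Fin p × Fin q)) :
    Matrix (Fin n → Fin p × Fin q) (Fin n → Fin p × Fin q) ℂ :=
  fun f g => if f = σ g then 1 else 0

lemma Pmat_one : (Pmat 1 : Matrix (Fin n → Fin p × Fin q) (Fin n → Fin p × Fin q) ℂ) = 1 := by
  funext f g
  simp [Pmat, Matrix.one_apply]
  congr

lemma Pmat_mul (σ τ : Equiv.Perm (Fin n → Fin p × Fin q)) :
    Pmat σ * Pmat τ = Pmat (σ * τ) := by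
  funext f g
  simp only [Pmat, Matrix.mul_apply, ite_mul, one_mul, zero_mul]
  rw [Finset.sum_eq_single (τ g)]
  · simp [Equiv.Perm.mul_apply]
    congr
  · intro h _ hh
    simp [hh]
  · simp

lemma trace_Pmat (σ : Equiv.Perm (Fin n → Fin p × Fin q)) :
    Matrix.trace (Pmat σ) =
      ((Finset.univ.filter (fun f : Fin n → Fin p × Fin q => f = σ f)).card : ℂ) := by
  rw [Matrix.trace, Finset.card_filter]
  push_cast
  rfl

/-- permute the V-components of a function by `s` -/
def act (s : Equiv.Perm (Fin n)) : Equiv.Perm (Fin n → Fin p × Fin q) where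
  toFun f k := ((f (s k)).1, (f k).2)
  invFun f k := ((f (s⁻¹ k)).1, (f k).2)
  left_inv f := by funext k; simp
  right_inv f := by funext k; simp

lemma act_apply (s : Equiv.Perm (Fin n)) (f : Fin n → Fin p × Fin q) (k : Fin n) :
    act s f k = ((f (s k)).1, (f k).2) := rfl

lemma act_one : (act 1 : Equiv.Perm (Fin n → Fin p × Fin q)) = 1 := by
  apply Equiv.ext; intro f; funext k; rfl

lemma act_mul (s t : Equiv.Perm (Fin n)) :
    (act s * act t : Equiv.Perm (Fin n → Fin p × Fin q)) = act (t * s) := by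
  apply Equiv.ext; intro f; funext k
  simp [Equiv.Perm.mul_apply, act_apply]

/-- the transposition (i, i+1) if it fits, else 1 -/
def sw (n i : ℕ) : Equiv.Perm (Fin n) :=
  if h : i + 1 < n then Equiv.swap ⟨i, Nat.lt_of_succ_lt h⟩ ⟨i + 1, h⟩ else 1

/-- T n m = sw (m-1) * ⋯ * sw 0 -/
def T (n : ℕ) : ℕ → Equiv.Perm (Fin n)
  | 0 => 1
  | m + 1 => sw n m * T n m

lemma Tval : ∀ m, m < n → ∀ k : Fin n,
    ((T n m k : Fin n) : ℕ) =
      if (k : ℕ) = 0 then m else if (k : ℕ) ≤ m then (k : ℕ) - 1 else (k : ℕ) := by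
  intro m
  induction m with
  | zero =>
    intro _ k
    simp only [T, Equiv.Perm.one_apply]
    split_ifs <;> omega
  | succ m ih =>
    intro hm k
    have hm' : m < n := by omega
    have hsw : sw n m = Equiv.swap ⟨m, hm'⟩ ⟨m + 1, hm⟩ := by
      simp [sw, hm]
    have hv := ih (by omega) k
    rw [show T n (m + 1) = sw n m * T n m from rfl, Equiv.Perm.mul_apply, hsw,
      Equiv.swap_apply_def]
    have hk := k.isLt
    simp only [apply_ite (Fin.val), Fin.ext_iff, Fin.val_mk]
    split_ifs at hv ⊢ <;> omega

lemma Rmat_eq (ε : ℂ) {i : ℕ} (hi : i + 1 < n) :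
    Rmat p q n ε i = ε • (Pmat (act (sw n i)) :
      Matrix (Fin n → Fin p × Fin q) (Fin n → Fin p × Fin q) ℂ) := by
  have hi' : i < n := Nat.lt_of_succ_lt hi
  have hsw : sw n i = Equiv.swap ⟨i, hi'⟩ ⟨i + 1, hi⟩ := by simp [sw, hi]
  funext f g
  simp only [Rmat, Pmat, Matrix.smul_apply, smul_eq_mul, mul_ite, mul_one, mul_zero]
  refine if_congr ?_ rfl rfl
  constructor
  · rintro ⟨h2, h1, hswap⟩
    funext k
    rw [act_apply, hsw]
    have hab := hswap ⟨i, hi'⟩ ⟨i + 1, hi⟩ rfl rfl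
    refine Prod.ext ?_ ?_
    · rcases eq_or_ne (k : ℕ) i with hk | hk
      · have : k = ⟨i, hi'⟩ := Fin.ext hk
        subst this
        simp [Equiv.swap_apply_left, hab.1]
      · rcases eq_or_ne (k : ℕ) (i + 1) with hk' | hk'
        · have : k = ⟨i + 1, hi⟩ := Fin.ext hk'
          subst this
          simp [Equiv.swap_apply_right, hab.2]
        · have hne1 : k ≠ ⟨i, hi'⟩ := by intro h; apply_fun Fin.val at h; exact hk h
          have hne2 : k ≠ ⟨i + 1, hi⟩ := by intro h; apply_fun Fin.val at h; exact hk' h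
          rw [Equiv.swap_apply_of_ne_of_ne hne1 hne2]
          exact h1 k hk hk'
    · exact h2 k
  · intro h
    subst h
    refine ⟨fun k => rfl, ?_, ?_⟩
    · intro k hk1 hk2
      have hne1 : k ≠ ⟨i, hi'⟩ := by intro h; apply_fun Fin.val at h; exact hk1 h
      have hne2 : k ≠ ⟨i + 1, hi⟩ := by intro h; apply_fun Fin.val at h; exact hk2 h
      rw [act_apply, hsw, Equiv.swap_apply_of_ne_of_ne hne1 hne2]
    · intro k l hk hl
      have hk' : k = ⟨i, hi'⟩ := Fin.ext hk
      have hl' : l = ⟨i + 1, hi⟩ := Fin.ext hl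
      subst hk'; subst hl'
      rw [act_apply, act_apply, hsw]
      simp [Equiv.swap_apply_left, Equiv.swap_apply_right]

lemma prod_eq (ε : ℂ) (hn : 2 ≤ n) : ∀ m, m ≤ n - 1 →
    ((List.range m).map (Rmat p q n ε)).prod = ε ^ m • Pmat (act (T n m)) := by
  intro m
  induction m with
  | zero =>
    intro _
    simp [T, act_one, Pmat_one]
  | succ m ih =>
    intro hm
    have hm' : m + 1 < n := by omega
    rw [List.range_succ, List.map_append, List.prod_append, ih (by omega)]
    simp only [List.map_cons, List.map_nil, List.prod_cons, List.prod_nil, mul_one]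
    rw [Rmat_eq ε hm']
    rw [smul_mul_smul_comm, Pmat_mul, act_mul]
    rw [show sw n m * T n m = T n (m + 1) from rfl]
    ring_nf

lemma fixed_count (hn : 2 ≤ n) :
    (Finset.univ.filter
      (fun f : Fin n → Fin p × Fin q => f = act (T n (n - 1)) f)).card = p * q ^ n := by
  have h0n : 0 < n := by omega
  -- fixed iff fst constant
  have key : ∀ f : Fin n → Fin p × Fin q,
      (f = act (T n (n - 1)) f) ↔ ∀ k : Fin n, (f k).1 = (f ⟨0, h0n⟩).1 := by
    intro f
    constructor
    · intro hf k
      have hfix : ∀ k : Fin n, (f k).1 = (f (T n (n - 1) k)).1 := by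
        intro k
        conv_lhs => rw [hf]
        rfl
      -- induction on k.val
      rcases k with ⟨j, hj⟩
      induction j with
      | zero => rfl
      | succ j ihj =>
        have hTv := Tval (n - 1) (by omega) ⟨j + 1, hj⟩
        have hT : T n (n - 1) ⟨j + 1, hj⟩ = ⟨j, by omega⟩ := by
          apply Fin.ext
          rw [hTv]
          simp
          omega
        rw [hfix ⟨j + 1, hj⟩, hT]
        exact ihj (by omega)
    · intro hc
      funext k
      rw [act_apply]
      refine Prod.ext ?_ ?_
      · rw [hc k, hc (T n (n - 1) k)]
      · rfl
  -- count functions with constant fst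
  have hset : (Finset.univ.filter
      (fun f : Fin n → Fin p × Fin q => f = act (T n (n - 1)) f)) =
      Finset.univ.filter (fun f : Fin n → Fin p × Fin q =>
        ∀ k : Fin n, (f k).1 = (f ⟨0, h0n⟩).1) := by
    ext f
    simp [key f]
  rw [hset]
  have hcard : (Finset.univ.filter (fun f : Fin n → Fin p × Fin q =>
      ∀ k : Fin n, (f k).1 = (f ⟨0, h0n⟩).1)).card
      = (Finset.univ : Finset (Fin p × (Fin n → Fin q))).card := by
    refine Finset.card_bij'
      (fun f _ => ((f ⟨0, h0n⟩).1, fun k => (f k).2))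
      (fun w _ => fun k => (w.1, w.2 k)) ?_ ?_ ?_ ?_
    · intro f hf
      exact Finset.mem_univ _
    · intro w _
      simp
    · intro f hf
      simp only [Finset.mem_filter] at hf
      funext k
      refine Prod.ext ?_ ?_
      · exact (hf.2 k).symm
      · rfl
    · intro w _
      rfl
  rw [hcard]
  simp [Finset.card_univ, mul_comm]

end Stmt5Aux

/-- For the `ε`-signed `V`-flip `R`-matrix on `E ⊗ E` (`E = V ⊗ W`, `dim V = p`,
`dim W = q`), the trace of `R₁ R₂ ⋯ R_{n−1}` on `E^{⊗n}` equals `ε^{n−1} p qⁿ`;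
equivalently the normalized trace equals `ε^{n−1} p^{1−n}`. -/
theorem stmt5 (p q n : ℕ) (hp : 0 < p) (hq : 0 < q) (hn : 2 ≤ n) (ε : ℂ)
    (hε : ε = 1 ∨ ε = -1) :
    Matrix.trace (((List.range (n - 1)).map (Rmat p q n ε)).prod)
        = ε ^ (n - 1) * (p : ℂ) * (q : ℂ) ^ n ∧
      Matrix.trace (((List.range (n - 1)).map (Rmat p q n ε)).prod) / ((p : ℂ) * q) ^ n
        = ε ^ (n - 1) * ((p : ℂ) ^ (n - 1))⁻¹ := by
  have hp' : (p : ℂ) ≠ 0 := Nat.cast_ne_zero.mpr hp.ne'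
  have hq' : (q : ℂ) ≠ 0 := Nat.cast_ne_zero.mpr hq.ne'
  have h1 : Matrix.trace (((List.range (n - 1)).map (Rmat p q n ε)).prod)
      = ε ^ (n - 1) * (p : ℂ) * (q : ℂ) ^ n := by
    rw [Stmt5Aux.prod_eq ε hn (n - 1) le_rfl, Matrix.trace_smul, Stmt5Aux.trace_Pmat,
      Stmt5Aux.fixed_count hn]
    push_cast
    rw [smul_eq_mul]
    ring
  refine ⟨h1, ?_⟩
  rw [h1, mul_pow]
  have hpn : (p : ℂ) ^ n = (p : ℂ) ^ (n - 1) * p := by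
    conv_lhs => rw [show n = (n - 1) + 1 by omega]
    rw [pow_succ]
  rw [hpn]
  have h2 : (p : ℂ) ^ (n - 1) ≠ 0 := pow_ne_zero _ hp'
  have h3 : (q : ℂ) ^ n ≠ 0 := pow_ne_zero _ hq'
  field_simp
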